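/- Positive semidefiniteness of the elementary variogram kernel: let H ∈ (0,1), and v(x) = ∫_{−π/2}^{π/2} c(θ) |x·u(θ)|^{2H} dθ with c : [−π/2, π/2] → ℝ≥0 integrable. Then the kernel K(x,y) = v(x) + v(y) − v(x − y) is positive semidefinite on ℝ²: for all n, points x₁,…,xₙ ∈ ℝ² and reals a₁,…,aₙ, Σ_{j,k} a_j a_k K(x_j, x_k) ≥ 0. -/

import Mathlib

open Real MeasureTheory ProbabilityTheory
open scoped RealInnerProductSpace

noncomputable def u (θ : ℝ) : EuclideanSpace ℝ (Fin 2) := WithLp.toLp 2 ![Real.cos θ, Real.sin θ]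

noncomputable def gam (H : ℝ) : ℝ := Real.pi / (H * Real.Gamma (2 * H) * Real.sin (H * Real.pi))

section FbmAux

noncomputable def fbmI (r : ℝ) : ℝ := ∫ x in Set.Ioi (0:ℝ), (1 - Real.cos x) * x ^ (-1 - r)

lemma fbm_integrand_nonneg (r t : ℝ) {x : ℝ} (hx : 0 ≤ x) :
    0 ≤ (1 - Real.cos (t * x)) * x ^ (-1 - r) :=
  mul_nonneg (by linarith [Real.cos_le_one (t*x)]) (Real.rpow_nonneg hx _)

lemma fbm_integrable (r : ℝ) (hr0 : 0 < r) (hr2 : r < 2) (t : ℝ) :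
    IntegrableOn (fun x => (1 - Real.cos (t * x)) * x ^ (-1 - r)) (Set.Ioi 0) := by
  have hmeas : Measurable fun x : ℝ => (1 - Real.cos (t * x)) * x ^ (-1 - r) :=
    ((measurable_const.sub (Real.measurable_cos.comp (measurable_const.mul measurable_id))).mul
      (measurable_id.pow_const _))
  have h1 : IntegrableOn (fun x => (1 - Real.cos (t * x)) * x ^ (-1 - r)) (Set.Ioc 0 1) := by
    have hg : IntegrableOn (fun x : ℝ => t ^ 2 / 2 * x ^ (1 - r)) (Set.Ioc 0 1) := by
      have := (intervalIntegral.intervalIntegrable_rpow' (a := 0) (b := 1)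
        (r := 1 - r) (by linarith)).const_mul (t ^ 2 / 2)
      rwa [intervalIntegrable_iff_integrableOn_Ioc_of_le zero_le_one] at this
    refine Integrable.mono hg (hmeas.aestronglyMeasurable) ?_
    rw [ae_restrict_iff' measurableSet_Ioc]
    filter_upwards with x hx
    have hx0 : 0 < x := hx.1
    have hb : 1 - Real.cos (t * x) ≤ (t * x) ^ 2 / 2 := by
      have := Real.one_sub_sq_div_two_le_cos (x := t * x)
      linarith
    have hnn : 0 ≤ (1 - Real.cos (t * x)) * x ^ (-1 - r) := fbm_integrand_nonneg r t hx0.le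
    rw [Real.norm_eq_abs, abs_of_nonneg hnn, Real.norm_eq_abs]
    refine le_trans ?_ (le_abs_self _)
    have hxp : (x : ℝ) ^ (2:ℕ) * x ^ (-1 - r) = x ^ (1 - r) := by
      rw [← Real.rpow_natCast x 2, ← Real.rpow_add hx0]
      congr 1
      ring
    calc (1 - Real.cos (t * x)) * x ^ (-1 - r)
        ≤ (t * x) ^ 2 / 2 * x ^ (-1 - r) :=
          mul_le_mul_of_nonneg_right hb (Real.rpow_nonneg hx0.le _)
      _ = t ^ 2 / 2 * (x ^ (2:ℕ) * x ^ (-1 - r)) := by ring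
      _ = t ^ 2 / 2 * x ^ (1 - r) := by rw [hxp]
  have h2 : IntegrableOn (fun x => (1 - Real.cos (t * x)) * x ^ (-1 - r)) (Set.Ioi 1) := by
    have hg : IntegrableOn (fun x : ℝ => 2 * x ^ (-1 - r)) (Set.Ioi 1) :=
      (integrableOn_Ioi_rpow_of_lt (by linarith) one_pos).const_mul 2
    refine Integrable.mono hg (hmeas.aestronglyMeasurable) ?_
    rw [ae_restrict_iff' measurableSet_Ioi]
    filter_upwards with x hx
    have hx0 : (0:ℝ) < x := lt_trans one_pos hx
    have hnn : 0 ≤ (1 - Real.cos (t * x)) * x ^ (-1 - r) := fbm_integrand_nonneg r t hx0.le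
    rw [Real.norm_eq_abs, abs_of_nonneg hnn, Real.norm_eq_abs]
    refine le_trans ?_ (le_abs_self _)
    have hb : 1 - Real.cos (t * x) ≤ 2 := by
      have := Real.neg_one_le_cos (t * x)
      linarith
    exact mul_le_mul_of_nonneg_right hb (Real.rpow_nonneg hx0.le _)
  have : Set.Ioi (0:ℝ) = Set.Ioc 0 1 ∪ Set.Ioi 1 := (Set.Ioc_union_Ioi_eq_Ioi zero_le_one).symm
  rw [this]
  exact h1.union h2

lemma fbm_scale_pos (r : ℝ) {t : ℝ} (ht : 0 < t) :
    ∫ x in Set.Ioi (0:ℝ), (1 - Real.cos (t * x)) * x ^ (-1 - r) = t ^ r * fbmI r := by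
  have h := MeasureTheory.integral_comp_mul_left_Ioi
    (fun y => (1 - Real.cos y) * y ^ (-1 - r)) 0 ht
  rw [mul_zero] at h
  have hcong : ∫ x in Set.Ioi (0:ℝ), (1 - Real.cos (t * x)) * x ^ (-1 - r)
      = ∫ x in Set.Ioi (0:ℝ), t ^ (1 + r) * ((1 - Real.cos (t * x)) * (t * x) ^ (-1 - r)) := by
    refine setIntegral_congr_fun measurableSet_Ioi (fun x hx => ?_)
    have hx0 : (0:ℝ) < x := hx
    rw [Real.mul_rpow ht.le hx0.le]
    have : t ^ (1 + r) * t ^ (-1 - r) = 1 := by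
      rw [← Real.rpow_add ht]
      norm_num
    calc (1 - Real.cos (t * x)) * x ^ (-1 - r)
        = (t ^ (1 + r) * t ^ (-1 - r)) * ((1 - Real.cos (t * x)) * x ^ (-1 - r)) := by
          rw [this, one_mul]
      _ = t ^ (1 + r) * ((1 - Real.cos (t * x)) * (t ^ (-1 - r) * x ^ (-1 - r))) := by ring
  rw [hcong, MeasureTheory.integral_const_mul, h, smul_eq_mul]
  have : t ^ (1 + r) * t⁻¹ = t ^ r := by
    rw [← Real.rpow_neg_one t, ← Real.rpow_add ht]
    norm_num
  rw [← mul_assoc, this, fbmI]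

lemma fbm_scale (r : ℝ) (hr0 : 0 < r) (t : ℝ) :
    ∫ x in Set.Ioi (0:ℝ), (1 - Real.cos (t * x)) * x ^ (-1 - r) = |t| ^ r * fbmI r := by
  rcases lt_trichotomy t 0 with ht | ht | ht
  · have h := fbm_scale_pos r (t := -t) (by linarith)
    rw [abs_of_neg ht]
    rw [← h]
    refine setIntegral_congr_fun measurableSet_Ioi (fun x hx => ?_)
    rw [show -t * x = -(t * x) by ring, Real.cos_neg]
  · subst ht
    simp [Real.zero_rpow hr0.ne']
  · rw [abs_of_pos ht]
    exact fbm_scale_pos r ht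

lemma fbmI_pos (r : ℝ) (hr0 : 0 < r) (hr2 : r < 2) : 0 < fbmI r := by
  have hint : IntegrableOn (fun x => (1 - Real.cos x) * x ^ (-1 - r)) (Set.Ioi 0) := by
    have := fbm_integrable r hr0 hr2 1
    simpa using this
  have hsub : Set.Ioc (π/2) π ⊆ Set.Ioi (0:ℝ) := fun x hx => by
    have := pi_pos
    have := hx.1
    simp only [Set.mem_Ioi]
    linarith
  have hlow : π ^ (-1 - r) * (volume (Set.Ioc (π/2) π)).toReal
      ≤ ∫ x in Set.Ioc (π/2) π, (1 - Real.cos x) * x ^ (-1 - r) := by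
    refine setIntegral_ge_of_const_le_real measurableSet_Ioc (measure_Ioc_lt_top).ne
      (fun x hx => ?_) (hint.mono_set hsub)
    have hx1 : π/2 ≤ x := le_of_lt hx.1
    have hx2 : x ≤ π := hx.2
    have hx0 : 0 < x := lt_of_lt_of_le (by positivity) hx1
    have hcos : Real.cos x ≤ 0 :=
      Real.cos_nonpos_of_pi_div_two_le_of_le hx1 (by linarith [pi_pos])
    have h1 : (1:ℝ) ≤ 1 - Real.cos x := by linarith
    have h2 : π ^ (-1 - r) ≤ x ^ (-1 - r) :=
      Real.rpow_le_rpow_of_nonpos hx0 hx2 (by linarith)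
    calc π ^ (-1 - r) = 1 * π ^ (-1 - r) := (one_mul _).symm
      _ ≤ (1 - Real.cos x) * x ^ (-1 - r) :=
          mul_le_mul h1 h2 (Real.rpow_nonneg pi_pos.le _) (by linarith)
  have hmono : ∫ x in Set.Ioc (π/2) π, (1 - Real.cos x) * x ^ (-1 - r) ≤ fbmI r := by
    refine setIntegral_mono_set hint ?_ (HasSubset.Subset.eventuallyLE hsub)
    filter_upwards [ae_restrict_mem measurableSet_Ioi] with x hx
    simpa using fbm_integrand_nonneg r 1 (le_of_lt hx)
  have hvol : (volume (Set.Ioc (π/2) π)).toReal = π/2 := by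
    rw [Real.volume_Ioc]
    rw [ENNReal.toReal_ofReal (by linarith [pi_pos])]
    ring
  have hc : 0 < π ^ (-1 - r) * (volume (Set.Ioc (π/2) π)).toReal := by
    rw [hvol]
    positivity
  linarith

/-- Key quadratic identity. -/
lemma fbm_quad_identity {n : ℕ} (a b : Fin n → ℝ) :
    ∑ j, ∑ k, a j * a k *
      ((1 - Real.cos (b j)) + (1 - Real.cos (b k)) - (1 - Real.cos (b j - b k)))
    = (∑ j, a j * (1 - Real.cos (b j)))^2 + (∑ j, a j * Real.sin (b j))^2 := by
  have hterm : ∀ j k, a j * a k *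
      ((1 - Real.cos (b j)) + (1 - Real.cos (b k)) - (1 - Real.cos (b j - b k)))
      = (a j * (1 - Real.cos (b j))) * (a k * (1 - Real.cos (b k)))
        + (a j * Real.sin (b j)) * (a k * Real.sin (b k)) := by
    intro j k
    rw [Real.cos_sub]
    ring
  calc ∑ j, ∑ k, a j * a k *
        ((1 - Real.cos (b j)) + (1 - Real.cos (b k)) - (1 - Real.cos (b j - b k)))
      = ∑ j, ∑ k, ((a j * (1 - Real.cos (b j))) * (a k * (1 - Real.cos (b k)))
        + (a j * Real.sin (b j)) * (a k * Real.sin (b k))) := by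
        refine Finset.sum_congr rfl (fun j _ => Finset.sum_congr rfl (fun k _ => hterm j k))
    _ = (∑ j, a j * (1 - Real.cos (b j)))^2 + (∑ j, a j * Real.sin (b j))^2 := by
        simp only [Finset.sum_add_distrib, ← Finset.sum_mul, ← Finset.mul_sum]
        ring

/-- PSD of the 1-D fBm-type kernel. -/
lemma fbm_psd (r : ℝ) (hr0 : 0 < r) (hr2 : r < 2) {n : ℕ} (s a : Fin n → ℝ) :
    0 ≤ ∑ j, ∑ k, a j * a k * (|s j| ^ r + |s k| ^ r - |s j - s k| ^ r) := by
  have hI := fbmI_pos r hr0 hr2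
  rw [← mul_nonneg_iff_of_pos_right hI]
  set F : Fin n → Fin n → ℝ → ℝ := fun j k x =>
    a j * a k * (((1 - Real.cos (s j * x)) + (1 - Real.cos (s k * x))
      - (1 - Real.cos ((s j - s k) * x))) * x ^ (-1 - r)) with hF
  have hFint : ∀ j k, IntegrableOn (F j k) (Set.Ioi 0) := by
    intro j k
    have h1 := fbm_integrable r hr0 hr2 (s j)
    have h2 := fbm_integrable r hr0 hr2 (s k)
    have h3 := fbm_integrable r hr0 hr2 (s j - s k)
    refine IntegrableOn.congr_fun (((h1.add h2).sub h3).const_mul (a j * a k))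
      (fun x _ => ?_) measurableSet_Ioi
    simp only [hF, Pi.add_apply, Pi.sub_apply]
    ring
  have hFval : ∀ j k, ∫ x in Set.Ioi (0:ℝ), F j k x
      = a j * a k * (|s j| ^ r + |s k| ^ r - |s j - s k| ^ r) * fbmI r := by
    intro j k
    have h1 := fbm_integrable r hr0 hr2 (s j)
    have h2 := fbm_integrable r hr0 hr2 (s k)
    have h3 := fbm_integrable r hr0 hr2 (s j - s k)
    have hstep : ∫ x in Set.Ioi (0:ℝ), F j k x
        = ∫ x in Set.Ioi (0:ℝ), a j * a k * (((1 - Real.cos (s j * x)) * x ^ (-1 - r)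
            + (1 - Real.cos (s k * x)) * x ^ (-1 - r))
            - (1 - Real.cos ((s j - s k) * x)) * x ^ (-1 - r)) := by
      refine setIntegral_congr_fun measurableSet_Ioi (fun x _ => ?_)
      simp only [hF]
      ring
    have h12 : IntegrableOn (fun x => (1 - Real.cos (s j * x)) * x ^ (-1 - r)
        + (1 - Real.cos (s k * x)) * x ^ (-1 - r)) (Set.Ioi 0) := h1.add h2
    rw [hstep, MeasureTheory.integral_const_mul, integral_sub h12 h3,
      integral_add h1 h2, fbm_scale r hr0, fbm_scale r hr0, fbm_scale r hr0]
    ring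
  calc (∑ j, ∑ k, a j * a k * (|s j| ^ r + |s k| ^ r - |s j - s k| ^ r)) * fbmI r
      = ∑ j, ∑ k, ∫ x in Set.Ioi (0:ℝ), F j k x := by
        rw [Finset.sum_mul]
        refine Finset.sum_congr rfl (fun j _ => ?_)
        rw [Finset.sum_mul]
        exact Finset.sum_congr rfl (fun k _ => (hFval j k).symm)
    _ = ∫ x in Set.Ioi (0:ℝ), ∑ j, ∑ k, F j k x := by
        rw [MeasureTheory.integral_finset_sum _ (fun j _ =>
          MeasureTheory.integrable_finset_sum _ (fun k _ => hFint j k))]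
        exact Finset.sum_congr rfl (fun j _ =>
          (MeasureTheory.integral_finset_sum _ (fun k _ => hFint j k)).symm)
    _ ≥ 0 := by
        refine le_of_le_of_eq ?_ rfl
        refine setIntegral_nonneg measurableSet_Ioi (fun x hx => ?_)
        have hx0 : (0:ℝ) < x := hx
        have hsum : ∑ j, ∑ k, F j k x
            = (∑ j, ∑ k, a j * a k * ((1 - Real.cos (s j * x)) + (1 - Real.cos (s k * x))
              - (1 - Real.cos (s j * x - s k * x)))) * x ^ (-1 - r) := by
          rw [Finset.sum_mul]
          refine Finset.sum_congr rfl (fun j _ => ?_)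
          rw [Finset.sum_mul]
          refine Finset.sum_congr rfl (fun k _ => ?_)
          simp only [hF]
          rw [show s j * x - s k * x = (s j - s k) * x by ring]
          ring
        rw [hsum]
        refine mul_nonneg ?_ (Real.rpow_nonneg hx0.le _)
        rw [fbm_quad_identity a (fun j => s j * x)]
        positivity

end FbmAux

set_option maxHeartbeats 1000000 in
theorem elementary_variogram_kernel_psd (H : ℝ) (hH : H ∈ Set.Ioo (0:ℝ) 1)
    (c : ℝ → ℝ) (hc0 : ∀ θ, 0 ≤ c θ)
    (hci : IntervalIntegrable c volume (-(π/2)) (π/2))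
    (v : EuclideanSpace ℝ (Fin 2) → ℝ)
    (hv : ∀ x, v x = ∫ θ in (-(π/2))..(π/2), c θ * |⟪x, u θ⟫| ^ (2*H)) :
    ∀ (n : ℕ) (x : Fin n → EuclideanSpace ℝ (Fin 2)) (a : Fin n → ℝ),
      0 ≤ ∑ j, ∑ k, a j * a k * (v (x j) + v (x k) - v (x j - x k)) := by
  obtain ⟨hH0, hH1⟩ := hH
  intro n x a
  set f : EuclideanSpace ℝ (Fin 2) → ℝ → ℝ :=
    fun y θ => c θ * |⟪y, u θ⟫| ^ (2*H) with hf
  have hcont : ∀ y : EuclideanSpace ℝ (Fin 2),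
      Continuous fun θ => |⟪y, u θ⟫| ^ (2*H) := by
    intro y
    have h1 : Continuous fun θ => ⟪y, u θ⟫ := by
      have : (fun θ => ⟪y, u θ⟫) = fun θ => y 0 * Real.cos θ + y 1 * Real.sin θ := by
        funext θ
        simp [u, PiLp.inner_apply, Fin.sum_univ_two, RCLike.inner_apply, mul_comm]
      rw [this]
      exact (continuous_const.mul Real.continuous_cos).add
        (continuous_const.mul Real.continuous_sin)
    exact h1.abs.rpow_const (fun θ => Or.inr (by positivity))
  have hfint : ∀ y : EuclideanSpace ℝ (Fin 2),
      IntervalIntegrable (f y) volume (-(π/2)) (π/2) := fun y =>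
    hci.mul_continuousOn (hcont y).continuousOn
  set g : Fin n → Fin n → ℝ → ℝ :=
    fun j k θ => a j * a k * (f (x j) θ + f (x k) θ - f (x j - x k) θ) with hg
  have hInt2 : ∀ j k, IntervalIntegrable (g j k) volume (-(π/2)) (π/2) := by
    intro j k
    have h12 : IntervalIntegrable (fun θ => f (x j) θ + f (x k) θ) volume (-(π/2)) (π/2) :=
      (hfint (x j)).add (hfint (x k))
    have h123 : IntervalIntegrable (fun θ => (f (x j) θ + f (x k) θ) - f (x j - x k) θ)
        volume (-(π/2)) (π/2) := h12.sub (hfint (x j - x k))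
    exact h123.const_mul _
  have hterm : ∀ j k, a j * a k * (v (x j) + v (x k) - v (x j - x k))
      = ∫ θ in (-(π/2))..(π/2), g j k θ := by
    intro j k
    have h12 : IntervalIntegrable (fun θ => f (x j) θ + f (x k) θ) volume (-(π/2)) (π/2) :=
      (hfint (x j)).add (hfint (x k))
    have e1 : ∫ θ in (-(π/2))..(π/2), (f (x j) θ + f (x k) θ)
        = (∫ θ in (-(π/2))..(π/2), f (x j) θ) + ∫ θ in (-(π/2))..(π/2), f (x k) θ :=
      intervalIntegral.integral_add (hfint (x j)) (hfint (x k))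
    have e2 : ∫ θ in (-(π/2))..(π/2), ((f (x j) θ + f (x k) θ) - f (x j - x k) θ)
        = (∫ θ in (-(π/2))..(π/2), (f (x j) θ + f (x k) θ))
          - ∫ θ in (-(π/2))..(π/2), f (x j - x k) θ :=
      intervalIntegral.integral_sub h12 (hfint (x j - x k))
    have e3 : ∫ θ in (-(π/2))..(π/2), g j k θ
        = a j * a k * ∫ θ in (-(π/2))..(π/2), ((f (x j) θ + f (x k) θ) - f (x j - x k) θ) :=
      intervalIntegral.integral_const_mul _ _
    rw [e3, e2, e1, hv, hv, hv]
  have hsumInt : ∀ j, IntervalIntegrable (fun θ => ∑ k, g j k θ) volume (-(π/2)) (π/2) := by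
    intro j
    have h := IntervalIntegrable.sum (μ := volume) (a := -(π/2)) (b := π/2)
      Finset.univ (fun k _ => hInt2 j k)
    have e : (∑ k, g j k) = fun θ => ∑ k, g j k θ := by
      funext θ
      simp
    rwa [e] at h
  calc (0:ℝ)
      ≤ ∫ θ in (-(π/2))..(π/2), ∑ j, ∑ k, g j k θ := by
        refine intervalIntegral.integral_nonneg (by linarith [pi_pos]) (fun θ _ => ?_)
        have key : ∑ j, ∑ k, g j k θ
            = c θ * ∑ j, ∑ k, a j * a k *
              (|⟪x j, u θ⟫| ^ (2*H) + |⟪x k, u θ⟫| ^ (2*H)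
                - |⟪x j, u θ⟫ - ⟪x k, u θ⟫| ^ (2*H)) := by
          rw [Finset.mul_sum]
          refine Finset.sum_congr rfl (fun j _ => ?_)
          rw [Finset.mul_sum]
          refine Finset.sum_congr rfl (fun k _ => ?_)
          simp only [hg, hf]
          rw [show ⟪x j - x k, u θ⟫ = ⟪x j, u θ⟫ - ⟪x k, u θ⟫ from inner_sub_left _ _ _]
          ring
        rw [key]
        exact mul_nonneg (hc0 θ)
          (fbm_psd (2*H) (by linarith) (by linarith) (fun j => ⟪x j, u θ⟫) a)
    _ = ∑ j, ∫ θ in (-(π/2))..(π/2), ∑ k, g j k θ :=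
        intervalIntegral.integral_finset_sum (fun j _ => hsumInt j)
    _ = ∑ j, ∑ k, ∫ θ in (-(π/2))..(π/2), g j k θ :=
        Finset.sum_congr rfl (fun j _ =>
          intervalIntegral.integral_finset_sum (fun k _ => hInt2 j k))
    _ = ∑ j, ∑ k, a j * a k * (v (x j) + v (x k) - v (x j - x k)) :=
        Finset.sum_congr rfl (fun j _ => Finset.sum_congr rfl (fun k _ => (hterm j k).symm))
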